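/- arXiv:1503.03936 — 4 statements merged into one kernel-verified Lean document; each statement's English description precedes it below -/
import Mathlib

section
/- Suppose the singular values of a symmetric matrix A satisfy |λⱼ| = c e^{−αj} for constants c > 0, α > 0. Then for any k and i₀ ≤ k, the product ∏_{j=1,j≠i₀}^{k} (|λⱼ| + |λ_{k+1}|)/(||λⱼ| − |λ_{i₀}||) is bounded by a constant depending only on α (independent of k and i₀); in particular it is at most ∏_{j=1}^{∞} (1 + e^{−jα}) · ∏_{j=1}^{∞} (1 − e^{−jα})^{−2}. -/
open Matrix BigOperators

private lemma aux_one_le_prod (s : Finset ℕ) (f : ℕ → ℝ) (h1 : ∀ i, 1 ≤ f i) :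
    1 ≤ ∏ i ∈ s, f i := by
  calc (1:ℝ) = ∏ _i ∈ s, (1:ℝ) := (Finset.prod_const_one).symm
    _ ≤ ∏ i ∈ s, f i := Finset.prod_le_prod (fun i _ => zero_le_one) (fun i _ => h1 i)

private lemma aux_prod_le_tprod (f : ℕ → ℝ) (h1 : ∀ i, 1 ≤ f i) (hf : Multipliable f)
    (s : Finset ℕ) : ∏ i ∈ s, f i ≤ ∏' i, f i := by
  refine ge_of_tendsto hf.hasProd (Filter.eventually_atTop.2 ⟨s, fun t hst => ?_⟩)
  calc ∏ i ∈ s, f i ≤ (∏ i ∈ t \ s, f i) * ∏ i ∈ s, f i :=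
      le_mul_of_one_le_left (Finset.prod_nonneg fun i _ => zero_le_one.trans (h1 i))
        (aux_one_le_prod _ _ h1)
    _ = ∏ i ∈ t, f i := Finset.prod_sdiff hst

private lemma aux_multipliable (g : ℕ → ℝ) (hpos : ∀ n, 0 < g n)
    (hsum : Summable fun n => Real.log (g n)) : Multipliable g :=
  Real.multipliable_of_summable_log hpos hsum

/-- If `|λⱼ| = c e^{−αj}` with `c, α > 0`, then for any `k` and `1 ≤ i₀ ≤ k` the product
`∏_{j=1,j≠i₀}^{k} (|λⱼ| + |λ_{k+1}|)/||λⱼ| − |λ_{i₀}||` is bounded by the constant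
`∏_{j=1}^{∞} (1 + e^{−jα}) · ∏_{j=1}^{∞} (1 − e^{−jα})^{−2}`, independent of `k, i₀`. -/
theorem minres_stmt8 (c α : ℝ) (hc : 0 < c) (hα : 0 < α) (lam : ℕ → ℝ)
    (hlam : ∀ j : ℕ, |lam j| = c * Real.exp (-α * j))
    (k i₀ : ℕ) (hi₀1 : 1 ≤ i₀) (hi₀k : i₀ ≤ k) :
    (∏ j ∈ (Finset.Icc 1 k).erase i₀, (|lam j| + |lam (k + 1)|) / abs (|lam j| - |lam i₀|)) ≤
      (∏' j : ℕ, (1 + Real.exp (-α * (j + 1)))) *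
        ∏' j : ℕ, ((1 - Real.exp (-α * (j + 1))) ^ 2)⁻¹ := by
  set q : ℝ := Real.exp (-α) with hqdef
  have hq0 : 0 < q := Real.exp_pos _
  have hq1 : q < 1 := Real.exp_lt_one_iff.2 (by linarith)
  have hlam' : ∀ j : ℕ, |lam j| = c * q ^ j := by
    intro j
    rw [hlam j, mul_comm (-α) (j : ℝ), Real.exp_nat_mul]
  have hqe : ∀ j : ℕ, Real.exp (-α * (j + 1)) = q ^ (j + 1) := by
    intro j
    rw [mul_comm, ← Nat.cast_add_one, Real.exp_nat_mul]
  -- geometric summability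
  have hgeo : Summable fun n : ℕ => q ^ (n + 1) :=
    (summable_nat_add_iff 1).2 (summable_geometric_of_lt_one hq0.le hq1)
  have hqn1 : ∀ n : ℕ, q ^ (n + 1) < 1 := fun n => pow_lt_one₀ hq0.le hq1 (Nat.succ_ne_zero n)
  -- the two basic infinite-product factors
  set G : ℕ → ℝ := fun m => 1 + q ^ (m + 1) with hGdef
  set H : ℕ → ℝ := fun m => (1 - q ^ (m + 1))⁻¹ with hHdef
  have hG1 : ∀ m, 1 ≤ G m := fun m => by
    simp only [hGdef]; nlinarith [pow_pos hq0 (m + 1)]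
  have hH1 : ∀ m, 1 ≤ H m := fun m =>
    (one_le_inv₀ (by nlinarith [hqn1 m])).2 (by nlinarith [pow_pos hq0 (m + 1)])
  have hG : Multipliable G := by
    refine aux_multipliable _ (fun m => lt_of_lt_of_le one_pos (hG1 m)) ?_
    refine Summable.of_nonneg_of_le (fun n => Real.log_nonneg (hG1 n)) (fun n => ?_) hgeo
    have := Real.log_le_sub_one_of_pos (lt_of_lt_of_le one_pos (hG1 n))
    simpa [hGdef] using this
  have hH : Multipliable H := by
    refine aux_multipliable _ (fun m => lt_of_lt_of_le one_pos (hH1 m)) ?_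
    refine Summable.of_nonneg_of_le (fun n => Real.log_nonneg (hH1 n))
      (fun n => ?_) (hgeo.mul_left (1 - q)⁻¹)
    have hx0 : 0 < q ^ (n + 1) := pow_pos hq0 _
    have hx1 : q ^ (n + 1) < 1 := hqn1 n
    have h1x : 0 < 1 - q ^ (n + 1) := by linarith
    have h1q : 0 < 1 - q := by linarith
    have hle : q ^ (n + 1) ≤ q := by
      calc q ^ (n + 1) ≤ q ^ 1 := pow_le_pow_of_le_one hq0.le hq1.le (by omega)
        _ = q := pow_one q
    have step1 : Real.log (H n) ≤ (1 - q ^ (n + 1))⁻¹ - 1 := Real.log_le_sub_one_of_pos (by positivity)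
    have step2 : (1 - q ^ (n + 1))⁻¹ - 1 = q ^ (n + 1) / (1 - q ^ (n + 1)) := by
      field_simp
      ring
    have step3 : q ^ (n + 1) / (1 - q ^ (n + 1)) ≤ q ^ (n + 1) / (1 - q) :=
      div_le_div_of_nonneg_left hx0.le h1q (by linarith)
    calc Real.log (H n) ≤ q ^ (n + 1) / (1 - q ^ (n + 1)) := by rw [← step2]; exact step1
      _ ≤ q ^ (n + 1) / (1 - q) := step3
      _ = (1 - q)⁻¹ * q ^ (n + 1) := by ring
  -- rewrite the RHS
  have hRHS : (∏' j : ℕ, (1 + Real.exp (-α * (j + 1)))) *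
      ∏' j : ℕ, ((1 - Real.exp (-α * (j + 1))) ^ 2)⁻¹
      = (∏' m, G m) * ((∏' m, H m) * ∏' m, H m) := by
    have e1 : (∏' j : ℕ, (1 + Real.exp (-α * (j + 1)))) = ∏' m, G m :=
      tprod_congr fun j => by rw [hqe j]
    have e2 : (∏' j : ℕ, ((1 - Real.exp (-α * (j + 1))) ^ 2)⁻¹) = ∏' m, (H m * H m) :=
      tprod_congr fun j => by rw [hqe j]; simp [hHdef, sq, mul_inv]
    rw [e1, e2, hH.tprod_mul hH]
  rw [hRHS]
  set S : Finset ℕ := (Finset.Icc 1 k).erase i₀ with hSdef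
  have hmem : ∀ j ∈ S, 1 ≤ j ∧ j ≤ k ∧ j ≠ i₀ := by
    intro j hj
    rw [hSdef, Finset.mem_erase, Finset.mem_Icc] at hj
    exact ⟨hj.2.1, hj.2.2, hj.1⟩
  set A : ℕ → ℝ := fun j => 1 + q ^ (k + 1 - j) with hAdef
  set B : ℕ → ℝ := fun j => (1 - q ^ ((i₀ - j) + (j - i₀)))⁻¹ with hBdef
  -- pointwise bound
  have key : ∀ j ∈ S, (|lam j| + |lam (k + 1)|) / |(|lam j| - |lam i₀|)| ≤ A j * B j := by
    intro j hj
    obtain ⟨hj1, hjk, hjne⟩ := hmem j hj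
    rw [hlam', hlam', hlam']
    have hcqj : 0 < c * q ^ j := by positivity
    have hnum : c * q ^ j + c * q ^ (k + 1) = (c * q ^ j) * (1 + q ^ (k + 1 - j)) := by
      have hp : q ^ (k + 1) = q ^ j * q ^ (k + 1 - j) := by
        rw [← pow_add]; congr 1; omega
      rw [hp]; ring
    rcases lt_or_gt_of_ne hjne with hlt | hgt
    · -- j < i₀ : exact equality
      have hd : (i₀ - j) + (j - i₀) = i₀ - j := by omega
      have hsplit : q ^ i₀ = q ^ j * q ^ (i₀ - j) := by
        rw [← pow_add]; congr 1; omega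
      have hY : q ^ (i₀ - j) < 1 := pow_lt_one₀ hq0.le hq1 (by omega)
      have hpos : 0 < c * q ^ j - c * q ^ i₀ := by
        rw [hsplit]; nlinarith [pow_pos hq0 j, pow_pos hq0 (i₀ - j)]
      have hden : |c * q ^ j - c * q ^ i₀| = (c * q ^ j) * (1 - q ^ (i₀ - j)) := by
        rw [abs_of_pos hpos, hsplit]; ring
      rw [hnum, hden, mul_div_mul_left _ _ (ne_of_gt hcqj), div_eq_mul_inv]
      apply le_of_eq
      simp only [hAdef, hBdef, hd]
    · -- i₀ < j
      have hd : (i₀ - j) + (j - i₀) = j - i₀ := by omega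
      have hsplit : q ^ j = q ^ i₀ * q ^ (j - i₀) := by
        rw [← pow_add]; congr 1; omega
      have hY : q ^ (j - i₀) < 1 := pow_lt_one₀ hq0.le hq1 (by omega)
      have hcqi : 0 < c * q ^ i₀ := by positivity
      have hneg : c * q ^ j - c * q ^ i₀ < 0 := by
        rw [hsplit]; nlinarith [pow_pos hq0 i₀, pow_pos hq0 (j - i₀)]
      have hden : |c * q ^ j - c * q ^ i₀| = (c * q ^ i₀) * (1 - q ^ (j - i₀)) := by
        rw [abs_of_neg hneg, hsplit]; ring
      have hqji : q ^ j ≤ q ^ i₀ := pow_le_pow_of_le_one hq0.le hq1.le hgt.le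
      have hX0 : 0 ≤ 1 + q ^ (k + 1 - j) := by positivity
      have hrw : A j * B j = ((c * q ^ i₀) * (1 + q ^ (k + 1 - j))) /
          ((c * q ^ i₀) * (1 - q ^ (j - i₀))) := by
        rw [mul_div_mul_left _ _ (ne_of_gt hcqi)]
        simp only [hAdef, hBdef, hd, div_eq_mul_inv]
      rw [hnum, hden, hrw]
      have hdenpos : 0 < (c * q ^ i₀) * (1 - q ^ (j - i₀)) := by
        apply mul_pos hcqi; linarith
      have h1Y : 0 < 1 - q ^ (j - i₀) := by linarith
      have hnumle : (c * q ^ j) * (1 + q ^ (k + 1 - j)) ≤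
          (c * q ^ i₀) * (1 + q ^ (k + 1 - j)) :=
        mul_le_mul_of_nonneg_right (mul_le_mul_of_nonneg_left hqji hc.le) hX0
      exact div_le_div_of_nonneg_right hnumle hdenpos.le
  -- nonnegativity facts
  have hf0 : ∀ j ∈ S, 0 ≤ (|lam j| + |lam (k + 1)|) / |(|lam j| - |lam i₀|)| :=
    fun j _ => div_nonneg (by positivity) (abs_nonneg _)
  have hB0 : ∀ j ∈ S, 0 ≤ B j := by
    intro j hj
    obtain ⟨h1, h2, hne⟩ := hmem j hj
    have : q ^ ((i₀ - j) + (j - i₀)) < 1 := pow_lt_one₀ hq0.le hq1 (by omega)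
    simp only [hBdef]
    have : 0 < 1 - q ^ ((i₀ - j) + (j - i₀)) := by linarith
    positivity
  have hTH1 : (1 : ℝ) ≤ ∏' m, H m := by
    simpa using aux_prod_le_tprod H hH1 hH ∅
  have hTG1 : (1 : ℝ) ≤ ∏' m, G m := by
    simpa using aux_prod_le_tprod G hG1 hG ∅
  -- step 1 : pointwise bound on the product
  have step1 : (∏ j ∈ S, (|lam j| + |lam (k + 1)|) / |(|lam j| - |lam i₀|)|)
      ≤ (∏ j ∈ S, A j) * ∏ j ∈ S, B j := by
    rw [← Finset.prod_mul_distrib]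
    exact Finset.prod_le_prod hf0 key
  -- bound on ∏ A
  have hA_le : ∏ j ∈ S, A j ≤ ∏' m, G m := by
    have hinj : ∀ x ∈ S, ∀ y ∈ S, k - x = k - y → x = y := by
      intro x hx y hy h
      have h1 := hmem x hx; have h2 := hmem y hy; omega
    have him : ∏ m ∈ S.image (fun j => k - j), G m = ∏ j ∈ S, G (k - j) :=
      Finset.prod_image hinj
    have hAe : ∏ j ∈ S, A j = ∏ j ∈ S, G (k - j) :=
      Finset.prod_congr rfl (fun j hj => by
        obtain ⟨h1, h2, _⟩ := hmem j hj
        simp only [hAdef, hGdef]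
        congr 2
        omega)
    rw [hAe, ← him]
    exact aux_prod_le_tprod G hG1 hG _
  -- bound on ∏ B
  have hBsplit : ∏ j ∈ S, B j =
      (∏ j ∈ S.filter (fun j => j < i₀), B j) * ∏ j ∈ S.filter (fun j => ¬ j < i₀), B j :=
    (Finset.prod_filter_mul_prod_filter_not S _ B).symm
  have hB1 : ∏ j ∈ S.filter (fun j => j < i₀), B j ≤ ∏' m, H m := by
    have hinj : ∀ x ∈ S.filter (fun j => j < i₀), ∀ y ∈ S.filter (fun j => j < i₀),
        i₀ - 1 - x = i₀ - 1 - y → x = y := by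
      intro x hx y hy h
      rw [Finset.mem_filter] at hx hy
      have h1 := hmem x hx.1; have h2 := hmem y hy.1
      omega
    have he : ∏ j ∈ S.filter (fun j => j < i₀), B j
        = ∏ j ∈ S.filter (fun j => j < i₀), H (i₀ - 1 - j) := by
      refine Finset.prod_congr rfl (fun j hj => ?_)
      rw [Finset.mem_filter] at hj
      have h1 := hmem j hj.1
      have hjlt := hj.2
      simp only [hBdef, hHdef]
      rw [show i₀ - j + (j - i₀) = (i₀ - 1 - j) + 1 from by omega]
    rw [he, ← Finset.prod_image hinj]
    exact aux_prod_le_tprod H hH1 hH _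
  have hB2 : ∏ j ∈ S.filter (fun j => ¬ j < i₀), B j ≤ ∏' m, H m := by
    have hinj : ∀ x ∈ S.filter (fun j => ¬ j < i₀), ∀ y ∈ S.filter (fun j => ¬ j < i₀),
        x - i₀ - 1 = y - i₀ - 1 → x = y := by
      intro x hx y hy h
      rw [Finset.mem_filter] at hx hy
      have h1 := hmem x hx.1; have h2 := hmem y hy.1
      omega
    have he : ∏ j ∈ S.filter (fun j => ¬ j < i₀), B j
        = ∏ j ∈ S.filter (fun j => ¬ j < i₀), H (j - i₀ - 1) := by
      refine Finset.prod_congr rfl (fun j hj => ?_)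
      rw [Finset.mem_filter] at hj
      have h1 := hmem j hj.1
      have hjge : i₀ < j := by
        have := hj.2
        omega
      simp only [hBdef, hHdef]
      rw [show i₀ - j + (j - i₀) = (j - i₀ - 1) + 1 from by omega]
    rw [he, ← Finset.prod_image hinj]
    exact aux_prod_le_tprod H hH1 hH _
  have hB_le : ∏ j ∈ S, B j ≤ (∏' m, H m) * ∏' m, H m := by
    rw [hBsplit]
    exact mul_le_mul hB1 hB2
      (Finset.prod_nonneg fun j hj => hB0 j (Finset.mem_filter.1 hj).1)
      (le_trans zero_le_one hTH1)
  calc (∏ j ∈ S, (|lam j| + |lam (k + 1)|) / |(|lam j| - |lam i₀|)|)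
      ≤ (∏ j ∈ S, A j) * ∏ j ∈ S, B j := step1
    _ ≤ (∏' m, G m) * ((∏' m, H m) * ∏' m, H m) :=
        mul_le_mul hA_le hB_le (Finset.prod_nonneg hB0) (le_trans zero_le_one hTG1)
end

section
/- Under the setting of the previous statement, partitioning D = diag(D₁, D₂) and B_k = [B_{k1}; B_{k2}] with D₁, B_{k1} of size k×k, the matrix D₁ B_{k1} is invertible and K_k(A, Ab) = span of the columns of V [I; Δ_k], where Δ_k = D₂ B_{k2} B_{k1}^{−1} D₁^{−1}. -/
open Matrix BigOperators

lemma col_span_mul_le {α : Type*} [Fintype α] {k : ℕ}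
    (N : Matrix α (Fin k) ℝ) (C : Matrix (Fin k) (Fin k) ℝ) :
    Submodule.span ℝ (Set.range (N * C)ᵀ) ≤ Submodule.span ℝ (Set.range Nᵀ) := by
  rw [Submodule.span_le]
  rintro _ ⟨i, rfl⟩
  have h : (N * C)ᵀ i = ∑ j, C j i • Nᵀ j := by
    ext p; simp [Matrix.mul_apply, mul_comm]
  rw [h]
  exact Submodule.sum_mem _ fun j _ =>
    Submodule.smul_mem _ _ (Submodule.subset_span ⟨j, rfl⟩)

lemma col_span_mul_eq {α : Type*} [Fintype α] {k : ℕ}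
    (N : Matrix α (Fin k) ℝ) (C : Matrix (Fin k) (Fin k) ℝ) (hC : IsUnit C.det) :
    Submodule.span ℝ (Set.range (N * C)ᵀ) = Submodule.span ℝ (Set.range Nᵀ) := by
  refine le_antisymm (col_span_mul_le N C) ?_
  have : N = N * C * C⁻¹ := by
    rw [Matrix.mul_assoc, Matrix.mul_nonsing_inv _ hC, Matrix.mul_one]
  conv_lhs => rw [this]
  exact col_span_mul_le _ _

/-- Partitioning `D = diag(D₁, D₂)` and `B_k = [B_{k1}; B_{k2}]`, the matrix `D₁ B_{k1}`
is invertible and `K_k(A, Ab)` equals the column span of `V [I; Δ_k]` with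
`Δ_k = D₂ B_{k2} B_{k1}⁻¹ D₁⁻¹`. -/
theorem minres_stmt10 (k m : ℕ)
    (A V : Matrix (Fin k ⊕ Fin m) (Fin k ⊕ Fin m) ℝ) (lam : Fin k ⊕ Fin m → ℝ)
    (hV : V ∈ Matrix.orthogonalGroup (Fin k ⊕ Fin m) ℝ)
    (hlam0 : ∀ i, lam i ≠ 0) (hinj : Function.Injective lam)
    (hA : A = V * Matrix.diagonal lam * Vᵀ)
    (b : Fin k ⊕ Fin m → ℝ) (hb : ∀ i, (∑ j, V j i * b j) ≠ 0)
    (D1 : Matrix (Fin k) (Fin k) ℝ)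
    (hD1 : D1 = Matrix.diagonal fun i => lam (Sum.inl i) * ∑ j, V j (Sum.inl i) * b j)
    (D2 : Matrix (Fin m) (Fin m) ℝ)
    (hD2 : D2 = Matrix.diagonal fun i => lam (Sum.inr i) * ∑ j, V j (Sum.inr i) * b j)
    (B1 : Matrix (Fin k) (Fin k) ℝ)
    (hB1 : B1 = Matrix.vandermonde fun i => lam (Sum.inl i))
    (B2 : Matrix (Fin m) (Fin k) ℝ)
    (hB2 : B2 = Matrix.of fun (p : Fin m) (j : Fin k) => lam (Sum.inr p) ^ (j : ℕ)) :
    IsUnit (D1 * B1).det ∧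
    Submodule.span ℝ (Set.range fun i : Fin k => (A ^ ((i : ℕ) + 1)) *ᵥ b) =
      Submodule.span ℝ (Set.range (V * Matrix.fromRows 1 (D2 * B2 * B1⁻¹ * D1⁻¹))ᵀ) := by
  have hVtV : Vᵀ * V = 1 := by
    have h := (Matrix.mem_orthogonalGroup_iff' _ _).mp hV
    simpa [Matrix.star_eq_conjTranspose, Matrix.conjTranspose] using h
  set c : Fin k ⊕ Fin m → ℝ := fun q => ∑ j, V j q * b j with hc
  -- determinants
  have hD1det : D1.det ≠ 0 := by
    rw [hD1, Matrix.det_diagonal]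
    exact Finset.prod_ne_zero_iff.mpr fun i _ => mul_ne_zero (hlam0 _) (hb _)
  have hB1det : B1.det ≠ 0 := by
    rw [hB1, Matrix.det_vandermonde]
    refine Finset.prod_ne_zero_iff.mpr fun i _ => Finset.prod_ne_zero_iff.mpr fun j hj => ?_
    have hij : (Sum.inl j : Fin k ⊕ Fin m) ≠ Sum.inl i := by
      simp only [ne_eq, Sum.inl.injEq]
      exact fun h => absurd h (Fin.ne_of_gt (Finset.mem_Ioi.mp hj))
    exact sub_ne_zero.mpr fun h => hij (hinj h)
  have hdet : IsUnit (D1 * B1).det := by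
    rw [Matrix.det_mul]
    exact isUnit_iff_ne_zero.mpr (mul_ne_zero hD1det hB1det)
  refine ⟨hdet, ?_⟩
  -- powers of A
  have key : ∀ d e : (Fin k ⊕ Fin m) → ℝ,
      (V * Matrix.diagonal d * Vᵀ) * (V * Matrix.diagonal e * Vᵀ)
        = V * Matrix.diagonal (fun p => d p * e p) * Vᵀ := by
    intro d e
    simp only [Matrix.mul_assoc]
    rw [← Matrix.mul_assoc Vᵀ V, hVtV, Matrix.one_mul,
      ← Matrix.mul_assoc (Matrix.diagonal d) (Matrix.diagonal e),
      Matrix.diagonal_mul_diagonal]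
  have hpow : ∀ n : ℕ, A ^ (n + 1) = V * Matrix.diagonal (fun p => lam p ^ (n + 1)) * Vᵀ := by
    intro n
    induction n with
    | zero => simpa [pow_one] using hA
    | succ n ih =>
        rw [pow_succ, ih, hA, key]
        have he : (fun p => lam p ^ (n + 1) * lam p) = fun p => lam p ^ (n + 1 + 1) :=
          funext fun p => (pow_succ _ _).symm
        rw [he]
  -- columns
  have hcol : (fun i : Fin k => (A ^ ((i : ℕ) + 1)) *ᵥ b)
      = (V * Matrix.fromRows (D1 * B1) (D2 * B2))ᵀ := by
    funext i
    funext p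
    have hVb : Vᵀ *ᵥ b = c := by
      funext q; simp [Matrix.mulVec, dotProduct, hc]
    rw [hpow, Matrix.transpose_apply, Matrix.mul_apply,
      ← Matrix.mulVec_mulVec, ← Matrix.mulVec_mulVec, hVb]
    have hdvec : Matrix.diagonal (fun p => lam p ^ ((i : ℕ) + 1)) *ᵥ c
        = fun q => lam q ^ ((i : ℕ) + 1) * c q := by
      funext q; rw [Matrix.mulVec_diagonal]
    rw [hdvec]
    simp only [Matrix.mulVec, dotProduct]
    refine Finset.sum_congr rfl fun q _ => ?_
    congr 1
    cases q with
    | inl r =>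
        rw [Matrix.fromRows_apply_inl, hD1, hB1, Matrix.diagonal_mul, Matrix.vandermonde]
        simp only [Matrix.of_apply]
        rw [pow_succ]
        ring
    | inr r =>
        rw [Matrix.fromRows_apply_inr, hD2, hB2, Matrix.diagonal_mul]
        simp only [Matrix.of_apply]
        rw [pow_succ]
        ring
  have hM : V * Matrix.fromRows (1 : Matrix (Fin k) (Fin k) ℝ) (D2 * B2 * B1⁻¹ * D1⁻¹) * (D1 * B1)
      = V * Matrix.fromRows (D1 * B1) (D2 * B2) := by
    rw [Matrix.mul_assoc, Matrix.fromRows_mul, Matrix.one_mul]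
    congr 2
    simp only [Matrix.mul_assoc]
    rw [← Matrix.mul_assoc D1⁻¹ D1 B1,
      Matrix.nonsing_inv_mul _ (isUnit_iff_ne_zero.mpr hD1det), Matrix.one_mul,
      Matrix.nonsing_inv_mul _ (isUnit_iff_ne_zero.mpr hB1det), Matrix.mul_one]
  rw [hcol, ← hM]
  exact col_span_mul_eq _ _ hdet
end

section
/- Let A ∈ ℝ^{n×n} be symmetric with spectral decomposition A = V Λ Vᵀ, eigenvalues |λ₁| ≥ ... ≥ |λₙ|, and V_k the first k eigenvector columns, Λ_k = diag(λ₁,...,λ_k). For any matrix P = Q_k Q_kᵀ with Q_k ∈ ℝ^{n×k} having orthonormal columns, ‖A(I − P)‖ ≤ |λ_{k+1}| + |λ₁| ‖V_kᵀ(I − P)‖. -/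
open Matrix BigOperators

/-- The spectral (Euclidean operator 2-) norm of a real matrix. -/
noncomputable def specNorm {m n : Type*} [Fintype m] [Fintype n] [DecidableEq n]
    (M : Matrix m n ℝ) : ℝ :=
  ‖LinearMap.toContinuousLinearMap (Matrix.toEuclideanLin M)‖

open scoped Matrix.Norms.L2Operator

lemma specNorm_eq_norm {m n : Type*} [Fintype m] [Fintype n] [DecidableEq n]
    (M : Matrix m n ℝ) : specNorm M = ‖M‖ := rfl

lemma conjT_eq_transpose {m n : Type*} (M : Matrix m n ℝ) : Mᴴ = Mᵀ := by
  ext i j; simp [Matrix.conjTranspose_apply]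

lemma l2norm_one_le (p : Type*) [Fintype p] [DecidableEq p] :
    ‖(1 : Matrix p p ℝ)‖ ≤ 1 := by
  rw [Matrix.cstar_norm_def]
  simp only [_root_.map_one]
  exact ContinuousLinearMap.norm_id_le

lemma l2norm_le_one_of_isometry {m p : Type*} [Fintype m] [Fintype p] [DecidableEq p]
    [DecidableEq m] (M : Matrix m p ℝ) (h : Mᵀ * M = 1) : ‖M‖ ≤ 1 := by
  have h1 : ‖Mᴴ * M‖ = ‖M‖ * ‖M‖ := Matrix.l2_opNorm_conjTranspose_mul_self M
  rw [conjT_eq_transpose, h] at h1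
  have h2 := l2norm_one_le p
  nlinarith [norm_nonneg M]

lemma l2norm_proj_le_one {n k : ℕ} (Q : Matrix (Fin n) (Fin k) ℝ) (hQ : Qᵀ * Q = 1) :
    ‖(1 - Q * Qᵀ : Matrix (Fin n) (Fin n) ℝ)‖ ≤ 1 := by
  set P : Matrix (Fin n) (Fin n) ℝ := 1 - Q * Qᵀ with hP
  have key : Q * Qᵀ * (Q * Qᵀ) = Q * Qᵀ := by
    rw [Matrix.mul_assoc, ← Matrix.mul_assoc Qᵀ Q Qᵀ, hQ, Matrix.one_mul]
  have hidem : P * P = P := by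
    simp [hP, sub_mul, mul_sub, key]
  have hsym : Pᴴ = P := by
    simp [hP, conjT_eq_transpose, Matrix.transpose_sub, Matrix.transpose_mul]
  have h1 : ‖Pᴴ * P‖ = ‖P‖ * ‖P‖ := Matrix.l2_opNorm_conjTranspose_mul_self P
  rw [hsym, hidem] at h1
  nlinarith [norm_nonneg P]

lemma l2norm_diagonal_le {p : Type*} [Fintype p] [DecidableEq p] (μ : p → ℝ) (c : ℝ)
    (hc : 0 ≤ c) (h : ∀ i, |μ i| ≤ c) : ‖(Matrix.diagonal μ : Matrix p p ℝ)‖ ≤ c := by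
  rw [Matrix.l2_opNorm_def]
  refine ContinuousLinearMap.opNorm_le_bound _ hc fun x => ?_
  have hx : ∀ i, (Matrix.toEuclideanLin (Matrix.diagonal μ) x) i = μ i * x i := by
    intro i
    simp [Matrix.toEuclideanLin_apply, Matrix.mulVec_diagonal]
  simp only [LinearEquiv.trans_apply, LinearMap.coe_toContinuousLinearMap']
  rw [EuclideanSpace.norm_eq, EuclideanSpace.norm_eq]
  rw [show c * Real.sqrt (∑ i, ‖x i‖ ^ 2) = Real.sqrt (c ^ 2 * ∑ i, ‖x i‖ ^ 2) by
    rw [Real.sqrt_mul (sq_nonneg c), Real.sqrt_sq hc]]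
  apply Real.sqrt_le_sqrt
  rw [Finset.mul_sum]
  apply Finset.sum_le_sum
  intro i _
  rw [hx i]
  have h2 : (μ i) ^ 2 ≤ c ^ 2 := sq_le_sq' (abs_le.mp (h i)).1 (abs_le.mp (h i)).2
  simp only [Real.norm_eq_abs, sq_abs]
  rw [mul_pow]
  nlinarith [sq_nonneg (x i)]

lemma sum_castLE {n k : ℕ} (hkn : k ≤ n) (f : Fin n → ℝ)
    (hf : ∀ a : Fin n, ¬((a : ℕ) < k) → f a = 0) :
    ∑ a : Fin n, f a = ∑ b : Fin k, f (Fin.castLE hkn b) := by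
  have h1 : ∑ a ∈ (Finset.univ.map (Fin.castLEEmb hkn)), f a = ∑ a : Fin n, f a := by
    apply Finset.sum_subset (Finset.subset_univ _)
    intro x _ hx
    apply hf
    intro hxk
    exact hx (Finset.mem_map.mpr ⟨⟨x.1, hxk⟩, Finset.mem_univ _, Fin.ext rfl⟩)
  rw [← h1, Finset.sum_map]
  rfl

/-- For symmetric `A = V Λ Vᵀ` with `|λ₁| ≥ ... ≥ |λₙ|` and any orthogonal projection
`P = Q Qᵀ` of rank `k`: `‖A(I − P)‖ ≤ |λ_{k+1}| + |λ₁| ‖V_kᵀ(I − P)‖`. -/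
theorem minres_stmt14 (n k : ℕ) (hkn : k < n)
    (A V : Matrix (Fin n) (Fin n) ℝ) (lam : Fin n → ℝ)
    (hV : V ∈ Matrix.orthogonalGroup (Fin n) ℝ)
    (hA : A = V * Matrix.diagonal lam * Vᵀ)
    (hord : ∀ i j : Fin n, i ≤ j → |lam j| ≤ |lam i|)
    (Q : Matrix (Fin n) (Fin k) ℝ) (hQ : Qᵀ * Q = 1) :
    specNorm (A * (1 - Q * Qᵀ)) ≤
      |lam ⟨k, hkn⟩| + |lam ⟨0, Nat.lt_of_le_of_lt (Nat.zero_le k) hkn⟩| *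
        specNorm ((V.submatrix id fun j : Fin k => (⟨j, j.2.trans hkn⟩ : Fin n))ᵀ *
          (1 - Q * Qᵀ)) := by
  classical
  set cst : Fin k → Fin n := fun j : Fin k => (⟨j, j.2.trans hkn⟩ : Fin n) with hcst
  have hcst_cast : cst = Fin.castLE hkn.le := rfl
  have hcst_inj : Function.Injective cst := by
    rw [hcst_cast]; exact Fin.castLE_injective _
  set P : Matrix (Fin n) (Fin n) ℝ := 1 - Q * Qᵀ with hPdef
  set Vk : Matrix (Fin n) (Fin k) ℝ := V.submatrix id cst with hVkdef
  -- orthogonality facts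
  have hVtV : Vᵀ * V = 1 := by
    have := (Matrix.mem_orthogonalGroup_iff' (n := Fin n) (R := ℝ)).mp hV
    exact this
  have hVVt : V * Vᵀ = 1 := by
    have := (Matrix.mem_orthogonalGroup_iff (n := Fin n) (R := ℝ)).mp hV
    exact this
  have hVkOrtho : Vkᵀ * Vk = 1 := by
    rw [hVkdef, Matrix.transpose_submatrix]
    have := Matrix.submatrix_mul_equiv Vᵀ V cst (Equiv.refl (Fin n)) cst
    simp only [Equiv.coe_refl] at this
    rw [this, hVtV, Matrix.submatrix_one cst hcst_inj]
  -- eigenvalue functions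
  set lamk := |lam ⟨k, hkn⟩| with hlamk
  set lam0 := |lam ⟨0, Nat.lt_of_le_of_lt (Nat.zero_le k) hkn⟩| with hlam0
  set μ : Fin n → ℝ := fun i => if (i : ℕ) < k then 0 else lam i with hμ
  set ν : Fin n → ℝ := fun i => if (i : ℕ) < k then lam i else 0 with hν
  set Dk : Matrix (Fin k) (Fin k) ℝ := Matrix.diagonal (fun b => lam (cst b)) with hDk
  have hμν : μ + ν = lam := by
    funext i
    by_cases h : (i : ℕ) < k <;> simp [hμ, hν, h]
  have hdiag : Matrix.diagonal lam = Matrix.diagonal μ + Matrix.diagonal ν := by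
    rw [← hμν]
    exact (Matrix.diagonal_add _ _).symm
  -- the key identity
  have h1 : Vk * Dk = (V * Matrix.diagonal ν).submatrix id cst := by
    ext i b
    have hb : ((cst b : Fin n) : ℕ) < k := b.2
    simp [hVkdef, hDk, Matrix.mul_diagonal, hν, hb]
  have hkey : Vk * Dk * Vkᵀ = V * Matrix.diagonal ν * Vᵀ := by
    ext i j
    rw [Matrix.mul_apply, Matrix.mul_apply]
    simp only [h1, Matrix.submatrix_apply, Matrix.transpose_apply, hVkdef, id_eq]
    rw [sum_castLE hkn.le (fun a => (V * Matrix.diagonal ν) i a * V j a) (by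
      intro a ha
      simp [Matrix.mul_diagonal, hν, ha])]
    rw [hcst_cast]
    simp only [← hcst_cast, ← hVkdef, h1, Matrix.submatrix_apply, id_eq]
  -- decomposition of A * P
  have hAP : A * P = V * Matrix.diagonal μ * Vᵀ * P + Vk * Dk * (Vkᵀ * P) := by
    rw [hA, hdiag, ← Matrix.mul_assoc (Vk * Dk), hkey]
    noncomm_ring
  -- norm bounds
  have hnV : ‖V‖ ≤ 1 := l2norm_le_one_of_isometry V hVtV
  have hnVt : ‖Vᵀ‖ ≤ 1 := l2norm_le_one_of_isometry Vᵀ (by rwa [Matrix.transpose_transpose])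
  have hnVk : ‖Vk‖ ≤ 1 := l2norm_le_one_of_isometry Vk hVkOrtho
  have hnP : ‖P‖ ≤ 1 := l2norm_proj_le_one Q hQ
  have hlamk0 : (0:ℝ) ≤ lamk := abs_nonneg _
  have hlam00 : (0:ℝ) ≤ lam0 := abs_nonneg _
  have hnμ : ‖(Matrix.diagonal μ : Matrix (Fin n) (Fin n) ℝ)‖ ≤ lamk := by
    apply l2norm_diagonal_le _ _ hlamk0
    intro i
    by_cases h : (i : ℕ) < k
    · simp [hμ, h, hlamk, abs_nonneg]
    · have hle : (⟨k, hkn⟩ : Fin n) ≤ i := by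
        rw [Fin.le_def]; exact Nat.le_of_not_lt h
      simpa [hμ, h] using hord _ _ hle
  have hnDk : ‖Dk‖ ≤ lam0 := by
    apply l2norm_diagonal_le _ _ hlam00
    intro b
    apply hord
    rw [Fin.le_def]
    exact Nat.zero_le _
  -- assemble
  rw [specNorm_eq_norm, specNorm_eq_norm, hAP]
  have b1 : ‖V * Matrix.diagonal μ * Vᵀ * P‖ ≤ lamk := by
    calc ‖V * Matrix.diagonal μ * Vᵀ * P‖
        ≤ ‖V * Matrix.diagonal μ * Vᵀ‖ * ‖P‖ := Matrix.l2_opNorm_mul _ _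
      _ ≤ (‖V * Matrix.diagonal μ‖ * ‖Vᵀ‖) * ‖P‖ := by
          apply mul_le_mul_of_nonneg_right (Matrix.l2_opNorm_mul _ _) (norm_nonneg _)
      _ ≤ ((‖V‖ * ‖(Matrix.diagonal μ : Matrix (Fin n) (Fin n) ℝ)‖) * ‖Vᵀ‖) * ‖P‖ := by
          apply mul_le_mul_of_nonneg_right _ (norm_nonneg _)
          apply mul_le_mul_of_nonneg_right (Matrix.l2_opNorm_mul _ _) (norm_nonneg _)
      _ ≤ ((1 * lamk) * 1) * 1 := by
          apply mul_le_mul _ hnP (norm_nonneg _) (by nlinarith)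
          apply mul_le_mul _ hnVt (norm_nonneg _) (by nlinarith)
          exact mul_le_mul hnV hnμ (norm_nonneg _) zero_le_one
      _ = lamk := by ring
  have b2 : ‖Vk * Dk * (Vkᵀ * P)‖ ≤ lam0 * ‖Vkᵀ * P‖ := by
    calc ‖Vk * Dk * (Vkᵀ * P)‖
        ≤ ‖Vk * Dk‖ * ‖Vkᵀ * P‖ := Matrix.l2_opNorm_mul _ _
      _ ≤ (‖Vk‖ * ‖Dk‖) * ‖Vkᵀ * P‖ := by
          apply mul_le_mul_of_nonneg_right (Matrix.l2_opNorm_mul _ _) (norm_nonneg _)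
      _ ≤ (1 * lam0) * ‖Vkᵀ * P‖ := by
          apply mul_le_mul_of_nonneg_right _ (norm_nonneg _)
          exact mul_le_mul hnVk hnDk (norm_nonneg _) zero_le_one
      _ = lam0 * ‖Vkᵀ * P‖ := by ring
  calc ‖V * Matrix.diagonal μ * Vᵀ * P + Vk * Dk * (Vkᵀ * P)‖
      ≤ ‖V * Matrix.diagonal μ * Vᵀ * P‖ + ‖Vk * Dk * (Vkᵀ * P)‖ := norm_add_le _ _
    _ ≤ lamk + lam0 * ‖Vkᵀ * P‖ := add_le_add b1 b2
end

section
/- With notation as above (T̂ₙ symmetric tridiagonal from an orthogonal similarity of A, with off-diagonals β_i > 0), for k = 1,...,n−2 the entries satisfy β_{k+1} ≤ γ_k and |α_{k+2}| ≤ γ_k, where γ_k = ‖A − Q_{k+1} T_k Q_kᵀ‖. -/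
open Matrix BigOperators RealInnerProductSpace

/-- Entries of `Qᵀ M Q` are bounded by the spectral norm of `M` when `Q` is orthogonal. -/
lemma abs_conj_entry_le_specNorm {n : ℕ} (M Q : Matrix (Fin n) (Fin n) ℝ)
    (hQ : Qᵀ * Q = 1) (i j : Fin n) :
    |(Qᵀ * M * Q) i j| ≤ specNorm M := by
  set f := LinearMap.toContinuousLinearMap (Matrix.toEuclideanLin M) with hf
  set u : EuclideanSpace ℝ (Fin n) := (EuclideanSpace.equiv (Fin n) ℝ).symm (fun l => Q l i)
    with hu_def
  set v : EuclideanSpace ℝ (Fin n) := (EuclideanSpace.equiv (Fin n) ℝ).symm (fun l => Q l j)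
    with hv_def
  have hucol : ∀ l, u l = Q l i := fun l => rfl
  have hvcol : ∀ l, v l = Q l j := fun l => rfl
  have hnorm : ∀ (w : EuclideanSpace ℝ (Fin n)) (c : Fin n), (∀ l, w l = Q l c) →
      ‖w‖ = 1 := by
    intro w c hw
    have h1 : (Qᵀ * Q) c c = 1 := by rw [hQ]; simp
    have hsum : ∑ l, Q l c * Q l c = 1 := by
      simpa [Matrix.mul_apply, Matrix.transpose_apply] using h1
    rw [EuclideanSpace.norm_eq w]
    have : ∑ l, ‖w l‖ ^ 2 = 1 := by
      rw [← hsum]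
      refine Finset.sum_congr rfl fun l _ => ?_
      rw [hw l, Real.norm_eq_abs, sq_abs, sq]
    rw [this, Real.sqrt_one]
  have hu : ‖u‖ = 1 := hnorm u i hucol
  have hv : ‖v‖ = 1 := hnorm v j hvcol
  have hfv : ∀ l, f v l = ∑ m, M l m * Q m j := by
    intro l
    show Matrix.toEuclideanLin M v l = _
    simp [Matrix.toEuclideanLin, Matrix.toLin'_apply, Matrix.mulVec, dotProduct, hvcol]
  have hinner : (inner ℝ u (f v) : ℝ) = ∑ l, Q l i * ∑ m, M l m * Q m j := by
    rw [PiLp.inner_apply]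
    refine Finset.sum_congr rfl fun l _ => ?_
    rw [RCLike.inner_apply, starRingEnd_apply, star_trivial, hucol l, hfv l, mul_comm]
  have hentry : (Qᵀ * M * Q) i j = (inner ℝ u (f v) : ℝ) := by
    rw [hinner]
    simp only [Matrix.mul_apply, Matrix.transpose_apply, Finset.sum_mul, Finset.mul_sum]
    rw [Finset.sum_comm]
    refine Finset.sum_congr rfl fun l _ => Finset.sum_congr rfl fun m _ => by ring
  calc |(Qᵀ * M * Q) i j| = |(inner ℝ u (f v) : ℝ)| := by rw [hentry]
    _ ≤ ‖u‖ * ‖f v‖ := abs_real_inner_le_norm u (f v)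
    _ ≤ ‖u‖ * (‖f‖ * ‖v‖) := by
        gcongr
        exact f.le_opNorm v
    _ = ‖f‖ := by rw [hu, hv]; ring
    _ = specNorm M := rfl

/-- For `T̂ₙ = Qₙᵀ A Qₙ` symmetric tridiagonal with positive off-diagonals, for
`k = 1, ..., n−2` the entries satisfy `β_{k+1} ≤ γ_k` and `|α_{k+2}| ≤ γ_k`, where
`γ_k = ‖A − Q_{k+1} T_k Q_kᵀ‖`. -/
theorem minres_stmt17 (n k : ℕ) (hk1 : 1 ≤ k) (hk : k + 1 < n)
    (A Qn That : Matrix (Fin n) (Fin n) ℝ)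
    (hAsymm : A.IsSymm)
    (hQn : Qn ∈ Matrix.orthogonalGroup (Fin n) ℝ)
    (hT : That = Qnᵀ * A * Qn)
    (htri : ∀ i j : Fin n, (j : ℕ) + 1 < (i : ℕ) → That i j = 0)
    (hβ : ∀ i j : Fin n, (i : ℕ) + 1 = (j : ℕ) → 0 < That i j)
    (Tk : Matrix (Fin (k + 1)) (Fin k) ℝ)
    (hTk : Tk = Matrix.of fun (i : Fin (k + 1)) (j : Fin k) =>
      That ⟨i, lt_trans i.2 hk⟩ ⟨j, lt_trans j.2 (Nat.lt_of_succ_lt hk)⟩)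
    (Qk : Matrix (Fin n) (Fin k) ℝ)
    (hQk : Qk = Qn.submatrix id fun j : Fin k =>
      (⟨j, lt_trans j.2 (Nat.lt_of_succ_lt hk)⟩ : Fin n))
    (Qk1 : Matrix (Fin n) (Fin (k + 1)) ℝ)
    (hQk1 : Qk1 = Qn.submatrix id fun j : Fin (k + 1) => (⟨j, lt_trans j.2 hk⟩ : Fin n)) :
    That ⟨k + 1, hk⟩ ⟨k, Nat.lt_of_succ_lt hk⟩ ≤ specNorm (A - Qk1 * Tk * Qkᵀ) ∧
    |That ⟨k + 1, hk⟩ ⟨k + 1, hk⟩| ≤ specNorm (A - Qk1 * Tk * Qkᵀ) := by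
  have hQQ : Qnᵀ * Qn = 1 := by
    simpa [Matrix.star_eq_conjTranspose] using hQn.1
  set i₀ : Fin n := ⟨k + 1, hk⟩ with hi₀
  -- row i₀ of Qnᵀ * Qk1 vanishes
  have hrow : ∀ j' : Fin (k + 1), (Qnᵀ * Qk1) i₀ j' = 0 := by
    intro j'
    have : (Qnᵀ * Qk1) i₀ j' = (Qnᵀ * Qn) i₀ ⟨j', lt_trans j'.2 hk⟩ := by
      simp only [Matrix.mul_apply, hQk1, Matrix.submatrix_apply, id]
    rw [this, hQQ]
    have hne : i₀ ≠ (⟨j', lt_trans j'.2 hk⟩ : Fin n) := by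
      intro h
      have := congrArg Fin.val h
      simp only [hi₀] at this
      omega
    exact Matrix.one_apply_ne hne
  have hzero : ∀ j : Fin n, (Qnᵀ * (Qk1 * Tk * Qkᵀ) * Qn) i₀ j = 0 := by
    intro j
    have heq : Qnᵀ * (Qk1 * Tk * Qkᵀ) * Qn = (Qnᵀ * Qk1) * (Tk * (Qkᵀ * Qn)) := by
      simp only [Matrix.mul_assoc]
    rw [heq, Matrix.mul_apply]
    refine Finset.sum_eq_zero fun j' _ => by rw [hrow j', zero_mul]
  have hconj : ∀ j : Fin n, (Qnᵀ * (A - Qk1 * Tk * Qkᵀ) * Qn) i₀ j = That i₀ j := by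
    intro j
    have : Qnᵀ * (A - Qk1 * Tk * Qkᵀ) * Qn
        = Qnᵀ * A * Qn - Qnᵀ * (Qk1 * Tk * Qkᵀ) * Qn := by
      rw [Matrix.mul_sub, Matrix.sub_mul]
    rw [this, Matrix.sub_apply, hzero j, sub_zero, hT]
  constructor
  · calc That i₀ ⟨k, Nat.lt_of_succ_lt hk⟩
        ≤ |That i₀ ⟨k, Nat.lt_of_succ_lt hk⟩| := le_abs_self _
      _ = |(Qnᵀ * (A - Qk1 * Tk * Qkᵀ) * Qn) i₀ ⟨k, Nat.lt_of_succ_lt hk⟩| := by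
          rw [hconj]
      _ ≤ specNorm (A - Qk1 * Tk * Qkᵀ) :=
          abs_conj_entry_le_specNorm _ _ hQQ _ _
  · calc |That i₀ ⟨k + 1, hk⟩|
        = |(Qnᵀ * (A - Qk1 * Tk * Qkᵀ) * Qn) i₀ ⟨k + 1, hk⟩| := by rw [hconj]
      _ ≤ specNorm (A - Qk1 * Tk * Qkᵀ) :=
          abs_conj_entry_le_specNorm _ _ hQQ _ _
end
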